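/- If λ = (x_1, …, x_n) ∈ ℤ^n is dominant, i.e. x_1 ≥ x_2 ≥ ⋯ ≥ x_n ≥ 0, then w_λ lies in the submonoid of Br_extg generated by ω together with all the f_i, i ∈ ℤ/nℤ. If λ is antidominant, i.e. x_1 ≤ x_2 ≤ ⋯ ≤ x_n ≤ 0, then w_λ lies in the submonoid of Br_extg generated by ω^{−1} together with all the f_i^{−1}, i ∈ ℤ/nℤ. -/
import Mathlib


/-- Generators of the cylindrical braid group: `f i` for `i ∈ ℤ/nℤ`, and `ω`. -/
inductive ExtGen (n : ℕ) : Type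
  | f : ZMod n → ExtGen n
  | om : ExtGen n

open FreeGroup in
/-- The defining relations of the cylindrical braid group `Br_extg`:
`f_i f_{i+1} f_i = f_{i+1} f_i f_{i+1}` (imposed only when `n ≥ 3`),
`f_i f_j = f_j f_i` for `j ∉ {i−1, i, i+1}`, and `ω f_i ω⁻¹ = f_{i+1}`. -/
def extRels (n : ℕ) : Set (FreeGroup (ExtGen n)) :=
  {r | (∃ i : ZMod n, 3 ≤ n ∧
          r = of (ExtGen.f i) * of (ExtGen.f (i + 1)) * of (ExtGen.f i) *
              (of (ExtGen.f (i + 1)) * of (ExtGen.f i) * of (ExtGen.f (i + 1)))⁻¹) ∨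
       (∃ i j : ZMod n, j ≠ i - 1 ∧ j ≠ i ∧ j ≠ i + 1 ∧
          r = of (ExtGen.f i) * of (ExtGen.f j) * (of (ExtGen.f j) * of (ExtGen.f i))⁻¹) ∨
       (∃ i : ZMod n,
          r = of ExtGen.om * of (ExtGen.f i) * (of ExtGen.om)⁻¹ * (of (ExtGen.f (i + 1)))⁻¹)}

/-- The cylindrical braid group `Br_extg`. -/
abbrev BrExt (n : ℕ) : Type := PresentedGroup (extRels n)

/-- The generator `f_i` of `Br_extg`. -/
def fB (n : ℕ) (i : ZMod n) : BrExt n := PresentedGroup.of (ExtGen.f i)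

/-- The generator `ω` of `Br_extg`. -/
def omB (n : ℕ) : BrExt n := PresentedGroup.of ExtGen.om

/-- `y_i = f_{i−1}⁻¹ ⋯ f_2⁻¹ f_1⁻¹ · ω · f_{n−1} f_{n−2} ⋯ f_{i+1} f_i`, for `1 ≤ i ≤ n`. -/
def yB (n : ℕ) (i : ℕ) : BrExt n :=
  (((List.range (i - 1)).reverse.map (fun k => (fB n ((k + 1 : ℕ) : ZMod n))⁻¹)).prod)
    * omB n *
  (((List.range (n - i)).map (fun k => fB n ((n - 1 - k : ℕ) : ZMod n))).prod)

/-- `w_λ = y_1^{x_1} y_2^{x_2} ⋯ y_n^{x_n}` for `λ = (x_1, …, x_n) ∈ ℤ^n`. -/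
def wB (n : ℕ) (lam : Fin n → ℤ) : BrExt n :=
  (List.ofFn (fun k : Fin n => yB n ((k : ℕ) + 1) ^ lam k)).prod


namespace BrAux

variable {n : ℕ}

lemma relQ {r : FreeGroup (ExtGen n)} (h : r ∈ extRels n) :
    PresentedGroup.mk (extRels n) r = 1 :=
  (QuotientGroup.eq_one_iff r).mpr (Subgroup.subset_normalClosure h)

lemma rel_braid (h3 : 3 ≤ n) (i : ZMod n) :
    fB n i * fB n (i + 1) * fB n i = fB n (i + 1) * fB n i * fB n (i + 1) := by
  have h := relQ (n := n) (Or.inl ⟨i, h3, rfl⟩)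
  simp only [map_mul, map_inv, mul_inv_eq_one] at h
  exact h

lemma rel_comm {i j : ZMod n} (h1 : j ≠ i - 1) (h2 : j ≠ i) (h3 : j ≠ i + 1) :
    fB n i * fB n j = fB n j * fB n i := by
  have h := relQ (n := n) (Or.inr (Or.inl ⟨i, j, h1, h2, h3, rfl⟩))
  simp only [map_mul, map_inv, mul_inv_eq_one] at h
  exact h

lemma rel_om (i : ZMod n) : omB n * fB n i = fB n (i + 1) * omB n := by
  have h := relQ (n := n) (Or.inr (Or.inr ⟨i, rfl⟩))
  simp only [map_mul, map_inv, mul_inv_eq_one] at h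
  exact mul_inv_eq_iff_eq_mul.mp h

/-- `f` with natural index. -/
def fN (n : ℕ) (m : ℕ) : BrExt n := fB n (m : ZMod n)

/-- ascending product `f_a f_{a+1} ⋯ f_b`. -/
def U (n a b : ℕ) : BrExt n := ((List.range (b + 1 - a)).map (fun k => fN n (k + a))).prod

/-- descending product `f_b f_{b-1} ⋯ f_a`. -/
def D (n a b : ℕ) : BrExt n := ((List.range (b + 1 - a)).map (fun k => fN n (b - k))).prod

lemma U_empty {a b : ℕ} (h : b + 1 ≤ a) : U n a b = 1 := by
  unfold U; rw [Nat.sub_eq_zero_of_le h]; simp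

lemma D_empty {a b : ℕ} (h : b + 1 ≤ a) : D n a b = 1 := by
  unfold D; rw [Nat.sub_eq_zero_of_le h]; simp

lemma U_single (a : ℕ) : U n a a = fN n a := by
  unfold U; rw [show a + 1 - a = 1 by omega]; simp [List.range_succ]

lemma D_single (a : ℕ) : D n a a = fN n a := by
  unfold D; rw [show a + 1 - a = 1 by omega]; simp [List.range_succ]

lemma U_succ {a b : ℕ} (h : a ≤ b + 1) : U n a (b + 1) = U n a b * fN n (b + 1) := by
  unfold U
  rw [show b + 1 + 1 - a = (b + 1 - a) + 1 by omega, List.range_succ, List.map_append,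
    List.prod_append]
  simp [show b + 1 - a + a = b + 1 by omega]

lemma U_left {a b : ℕ} (h : a ≤ b) : U n a b = fN n a * U n (a + 1) b := by
  unfold U
  rw [show b + 1 - a = (b - a) + 1 by omega, List.range_succ_eq_map]
  simp only [List.map_cons, List.prod_cons, List.map_map, Nat.zero_add]
  rw [show b + 1 - (a + 1) = b - a by omega]
  rw [List.map_congr_left (g := fun k => fN n (k + (a + 1))) (fun k hk => by
    simp only [Function.comp_apply]; congr 1; omega)]

lemma D_succ {a b : ℕ} (h : a ≤ b + 1) : D n a (b + 1) = fN n (b + 1) * D n a b := by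
  unfold D
  rw [show b + 1 + 1 - a = (b + 1 - a) + 1 by omega, List.range_succ_eq_map]
  simp only [List.map_cons, List.prod_cons, List.map_map, Nat.sub_zero]
  rw [List.map_congr_left (g := fun k => fN n (b - k)) (fun k hk => by
    simp only [Function.comp_apply]; congr 1; omega)]

lemma D_right {a b : ℕ} (h : a ≤ b) : D n a b = D n (a + 1) b * fN n a := by
  unfold D
  rw [show b + 1 - a = (b - a) + 1 by omega, List.range_succ, List.map_append,
    List.prod_append, show b + 1 - (a + 1) = b - a by omega]
  simp [show b - (b - a) = a by omega]

lemma cast_ne {a b : ℕ} (ha : a < n) (hb : b < n) (hne : a ≠ b) : (a : ZMod n) ≠ b := by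
  intro h
  have := (ZMod.natCast_eq_natCast_iff _ _ _).mp h
  unfold Nat.ModEq at this
  rw [Nat.mod_eq_of_lt ha, Nat.mod_eq_of_lt hb] at this
  exact hne this

lemma fcomm {a b : ℕ} (h1 : 1 ≤ a) (h2 : a + 2 ≤ b) (h3 : b ≤ n - 1) :
    Commute (fN n a) (fN n b) := by
  have hn : 4 ≤ n := by omega
  have e1 : ((a : ZMod n) - 1) = ((a - 1 : ℕ) : ZMod n) := by
    rw [Nat.cast_sub h1, Nat.cast_one]
  have e2 : ((a : ZMod n) + 1) = ((a + 1 : ℕ) : ZMod n) := by push_cast; ring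
  refine rel_comm ?_ ?_ ?_
  · rw [e1]; exact cast_ne (by omega) (by omega) (by omega)
  · exact cast_ne (by omega) (by omega) (by omega)
  · rw [e2]; exact cast_ne (by omega) (by omega) (by omega)

lemma fbraid {a : ℕ} (h1 : 1 ≤ a) (h2 : a + 1 ≤ n - 1) :
    fN n a * fN n (a + 1) * fN n a = fN n (a + 1) * fN n a * fN n (a + 1) := by
  have h3 : 3 ≤ n := by omega
  have e2 : ((a + 1 : ℕ) : ZMod n) = (a : ZMod n) + 1 := by push_cast; ring
  have := rel_braid h3 (a : ZMod n)
  rw [← e2] at this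
  exact this

lemma om_f (m : ℕ) : omB n * fN n m = fN n (m + 1) * omB n := by
  have := rel_om (m : ZMod n)
  rw [show ((m : ZMod n) + 1) = ((m + 1 : ℕ) : ZMod n) by push_cast; ring] at this
  exact this

lemma om_shift (l : List ℕ) :
    omB n * (l.map (fN n)).prod = (l.map (fun m => fN n (m + 1))).prod * omB n := by
  induction l with
  | nil => simp
  | cons a t ih =>
    simp only [List.map_cons, List.prod_cons]
    rw [← mul_assoc, om_f, mul_assoc, ih, ← mul_assoc]

lemma omU (a b : ℕ) : omB n * U n a b = U n (a + 1) (b + 1) * omB n := by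
  unfold U
  rw [show b + 1 + 1 - (a + 1) = b + 1 - a by omega]
  have h := om_shift (n := n) ((List.range (b + 1 - a)).map (fun k => k + a))
  simp only [List.map_map, Function.comp_def] at h
  have e : List.map (fun x => fN n (x + a + 1)) (List.range (b + 1 - a)) =
      List.map (fun k => fN n (k + (a + 1))) (List.range (b + 1 - a)) :=
    List.map_congr_left (fun k hk => by congr 1)
  rw [e] at h
  exact h

lemma omD (a b : ℕ) : omB n * D n a b = D n (a + 1) (b + 1) * omB n := by
  unfold D
  rw [show b + 1 + 1 - (a + 1) = b + 1 - a by omega]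
  have h := om_shift (n := n) ((List.range (b + 1 - a)).map (fun k => b - k))
  simp only [List.map_map, Function.comp_def] at h
  have e : List.map (fun x => fN n (b - x + 1)) (List.range (b + 1 - a)) =
      List.map (fun k => fN n (b + 1 - k)) (List.range (b + 1 - a)) :=
    List.map_congr_left (fun k hk => by
      congr 1
      have := List.mem_range.mp hk
      omega)
  rw [e] at h
  exact h

lemma commU_above {m a b : ℕ} (hm : 1 ≤ m) (h : m + 2 ≤ a) (hb : b ≤ n - 1) :
    Commute (fN n m) (U n a b) := by
  unfold U
  apply Commute.list_prod_right
  intro x hx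
  simp only [List.mem_map, List.mem_range] at hx
  obtain ⟨k, hk, rfl⟩ := hx
  exact fcomm hm (by omega) (by omega)

lemma commU_below {m a b : ℕ} (ha : 1 ≤ a) (h : b + 2 ≤ m) (hm : m ≤ n - 1) :
    Commute (fN n m) (U n a b) := by
  unfold U
  apply Commute.list_prod_right
  intro x hx
  simp only [List.mem_map, List.mem_range] at hx
  obtain ⟨k, hk, rfl⟩ := hx
  exact (fcomm (by omega) (by omega) hm).symm

lemma commD_above {m a b : ℕ} (hm : 1 ≤ m) (h : m + 2 ≤ a) (hb : b ≤ n - 1) :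
    Commute (fN n m) (D n a b) := by
  unfold D
  apply Commute.list_prod_right
  intro x hx
  simp only [List.mem_map, List.mem_range] at hx
  obtain ⟨k, hk, rfl⟩ := hx
  exact fcomm hm (by omega) (by omega)

lemma commD_below {m a b : ℕ} (ha : 1 ≤ a) (h : b + 2 ≤ m) (hm : m ≤ n - 1) :
    Commute (fN n m) (D n a b) := by
  unfold D
  apply Commute.list_prod_right
  intro x hx
  simp only [List.mem_map, List.mem_range] at hx
  obtain ⟨k, hk, rfl⟩ := hx
  exact (fcomm (by omega) (by omega) hm).symm

lemma commUD {a b c d : ℕ} (ha : 1 ≤ a) (h : b + 2 ≤ c) (hd : d ≤ n - 1) :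
    Commute (U n a b) (D n c d) := by
  unfold D
  apply Commute.list_prod_right
  intro x hx
  simp only [List.mem_map, List.mem_range] at hx
  obtain ⟨k, hk, rfl⟩ := hx
  exact (commU_below ha (by omega) (by omega)).symm

lemma Usplit {a b c : ℕ} (h1 : a ≤ c + 1) (h2 : c ≤ b) :
    U n a b = U n a c * U n (c + 1) b := by
  induction b, h2 using Nat.le_induction with
  | base => rw [U_empty (le_refl (c + 1)), mul_one]
  | succ b hb ih =>
    rw [U_succ (by omega), ih, U_succ (by omega), mul_assoc]

lemma Dsplit {a b c : ℕ} (h1 : a ≤ c + 1) (h2 : c ≤ b) :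
    D n a b = D n (c + 1) b * D n a c := by
  induction b, h2 using Nat.le_induction with
  | base => rw [D_empty (le_refl (c + 1)), one_mul]
  | succ b hb ih =>
    rw [D_succ (by omega), ih, D_succ (by omega), mul_assoc]

lemma U_slide {a m b : ℕ} (ha : 1 ≤ a) (h1 : a ≤ m) (h2 : m + 1 ≤ b) (hb : b ≤ n - 1) :
    SemiconjBy (U n a b) (fN n m) (fN n (m + 1)) := by
  have e1 : U n a b = U n a (m - 1) * ((fN n m * fN n (m + 1)) * U n (m + 2) b) := by
    have s1 : U n a b = U n a (m + 1) * U n (m + 2) b := Usplit (c := m + 1) (by omega) (by omega)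
    have s2 : U n a (m + 1) = U n a (m - 1) * U n m (m + 1) := by
      have := Usplit (n := n) (a := a) (b := m + 1) (c := m - 1) (by omega) (by omega)
      rw [show m - 1 + 1 = m by omega] at this
      exact this
    have s3 : U n m (m + 1) = fN n m * fN n (m + 1) := by
      rw [U_succ (by omega), U_single]
    rw [s1, s2, s3]
    try simp only [mul_assoc]
  rw [e1]
  have hA : SemiconjBy (U n (m + 2) b) (fN n m) (fN n m) :=
    (commU_above (by omega) (by omega) hb).symm
  have hB : SemiconjBy (fN n m * fN n (m + 1)) (fN n m) (fN n (m + 1)) := by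
    show fN n m * fN n (m + 1) * fN n m = fN n (m + 1) * (fN n m * fN n (m + 1))
    rw [fbraid (by omega) (by omega), mul_assoc]
  have hC : SemiconjBy (U n a (m - 1)) (fN n (m + 1)) (fN n (m + 1)) :=
    (commU_below ha (by omega) (by omega)).symm
  exact hC.mul_left (hB.mul_left hA)

lemma D_slide {a m b : ℕ} (ha : 1 ≤ a) (h1 : a ≤ m) (h2 : m + 1 ≤ b) (hb : b ≤ n - 1) :
    SemiconjBy (D n a b) (fN n (m + 1)) (fN n m) := by
  have e1 : D n a b = D n (m + 2) b * ((fN n (m + 1) * fN n m) * D n a (m - 1)) := by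
    have s1 : D n a b = D n (m + 2) b * D n a (m + 1) := Dsplit (c := m + 1) (by omega) (by omega)
    have s2 : D n a (m + 1) = D n m (m + 1) * D n a (m - 1) := by
      have := Dsplit (n := n) (a := a) (b := m + 1) (c := m - 1) (by omega) (by omega)
      rw [show m - 1 + 1 = m by omega] at this
      exact this
    have s3 : D n m (m + 1) = fN n (m + 1) * fN n m := by
      rw [D_succ (by omega), D_single]
    rw [s1, s2, s3]
    try simp only [mul_assoc]
  rw [e1]
  have hA : SemiconjBy (D n a (m - 1)) (fN n (m + 1)) (fN n (m + 1)) :=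
    (commD_below ha (by omega) (by omega)).symm
  have hB : SemiconjBy (fN n (m + 1) * fN n m) (fN n (m + 1)) (fN n m) := by
    show fN n (m + 1) * fN n m * fN n (m + 1) = fN n m * (fN n (m + 1) * fN n m)
    rw [← fbraid (by omega) (by omega), mul_assoc]
  have hC : SemiconjBy (D n (m + 2) b) (fN n m) (fN n m) :=
    (commD_above (by omega) (by omega) hb).symm
  exact hC.mul_left (hB.mul_left hA)

/-- Clean form of `yB`. -/
def yN (n i : ℕ) : BrExt n := (U n 1 (i - 1))⁻¹ * omB n * D n i (n - 1)

lemma y_eq (hn : 2 ≤ n) (i : ℕ) : yB n i = yN n i := by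
  unfold yB yN U D
  congr 1
  · congr 1
    rw [show i - 1 + 1 - 1 = i - 1 by omega]
    rw [List.prod_inv_reverse, List.map_map, ← List.map_reverse]
    rfl
  · rw [show n - 1 + 1 - i = n - i by omega]
    rfl

lemma y_rec {i : ℕ} (h1 : 1 ≤ i) (h2 : i ≤ n - 1) :
    yN n (i + 1) = (fN n i)⁻¹ * yN n i * (fN n i)⁻¹ := by
  have hU : U n 1 i = U n 1 (i - 1) * fN n i := by
    have := U_succ (n := n) (a := 1) (b := i - 1) (by omega)
    rw [show i - 1 + 1 = i by omega] at this
    exact this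
  have hD : D n i (n - 1) = D n (i + 1) (n - 1) * fN n i := D_right h2
  unfold yN
  rw [show i + 1 - 1 = i by omega, hU, hD]
  simp [mul_assoc, mul_inv_rev]

lemma fy_comm {m i : ℕ} (hm1 : 1 ≤ m) (hm2 : m ≤ n - 1) (hi1 : 1 ≤ i) (hi2 : i ≤ n)
    (ne1 : m + 1 ≠ i) (ne2 : m ≠ i) : Commute (fN n m) (yN n i) := by
  refine Commute.symm ?_
  show SemiconjBy (yN n i) (fN n m) (fN n m)
  unfold yN
  rcases lt_or_gt_of_ne ne2 with hlt | hgt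
  · -- m ≤ i - 2
    have hmi : m + 2 ≤ i := by omega
    have a1 : SemiconjBy (U n 1 (i - 1))⁻¹ (fN n (m + 1)) (fN n m) :=
      (U_slide (by omega) (by omega) (by omega) (by omega)).inv_symm_left
    have a2 : SemiconjBy (omB n) (fN n m) (fN n (m + 1)) := om_f m
    have a3 : SemiconjBy (D n i (n - 1)) (fN n m) (fN n m) :=
      (commD_above hm1 hmi (by omega)).symm
    exact (a1.mul_left a2).mul_left a3
  · -- m ≥ i + 1
    have a1 : SemiconjBy (U n 1 (i - 1))⁻¹ (fN n m) (fN n m) :=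
      (commU_below (n := n) (a := 1) (b := i - 1) (m := m)
        (by omega) (by omega) hm2).symm.inv_left
    have a2 : SemiconjBy (omB n) (fN n (m - 1)) (fN n m) := by
      have := om_f (n := n) (m - 1)
      rw [show m - 1 + 1 = m by omega] at this
      exact this
    have a3 : SemiconjBy (D n i (n - 1)) (fN n m) (fN n (m - 1)) := by
      have := D_slide (n := n) (a := i) (m := m - 1) (b := n - 1)
        (by omega) (by omega) (by omega) (by omega)
      rw [show m - 1 + 1 = m by omega] at this
      exact this
    exact (a1.mul_left a2).mul_left a3

section MoveHelpers

variable {G : Type*} [Group G]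

lemma move2 {a b c d : G} (h : a * b = c * d) (z : G) : a * (b * z) = c * (d * z) := by
  simp only [← mul_assoc]; rw [h]

lemma move3 {a b c d e g : G} (h : a * (b * c) = d * (e * g)) (z : G) :
    a * (b * (c * z)) = d * (e * (g * z)) := by
  simp only [← mul_assoc] at h ⊢; rw [h]

lemma braid_conj2 {x y : G} (h : x * y * x = y * x * y) :
    x⁻¹ * (y * x) = y * (x * y⁻¹) := by
  have h2 := congrArg (fun z => x⁻¹ * z * y⁻¹) h
  simp only [mul_assoc, mul_inv_cancel, mul_one, inv_mul_cancel_left] at h2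
  exact h2.symm

lemma braid_conj3 {x y : G} (h : x * y * x = y * x * y) :
    x⁻¹ * (y⁻¹ * x) = y * (x⁻¹ * y⁻¹) := by
  have h2 := congrArg Inv.inv (braid_conj2 h)
  simp only [mul_inv_rev, inv_inv, mul_assoc] at h2
  exact h2

end MoveHelpers

lemma K1z {i : ℕ} (h1 : 1 ≤ i) : i ≤ n - 1 → ∀ z : BrExt n,
    fN n i * ((U n 1 (i - 1))⁻¹ * ((U n 2 i)⁻¹ * z)) =
      (U n 1 (i - 1))⁻¹ * ((U n 2 i)⁻¹ * (fN n 1 * z)) := by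
  induction i, h1 using Nat.le_induction with
  | base =>
    intro h2 z
    rw [U_empty (by omega), U_empty (by omega)]
    simp
  | succ i hi ih =>
    intro h2 z
    have eU : (U n 1 (i + 1 - 1))⁻¹ = (fN n i)⁻¹ * (U n 1 (i - 1))⁻¹ := by
      rw [show i + 1 - 1 = i by omega]
      have h := U_succ (n := n) (a := 1) (b := i - 1) (by omega)
      rw [show i - 1 + 1 = i by omega] at h
      rw [h, mul_inv_rev]
    have eV : (U n 2 (i + 1))⁻¹ = (fN n (i + 1))⁻¹ * (U n 2 i)⁻¹ := by
      rw [U_succ (by omega), mul_inv_rev]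
    have cAf : ∀ w : BrExt n, (U n 1 (i - 1))⁻¹ * ((fN n (i + 1))⁻¹ * w) =
        (fN n (i + 1))⁻¹ * ((U n 1 (i - 1))⁻¹ * w) := fun w =>
      move2 ((commU_below (n := n) (a := 1) (b := i - 1) (m := i + 1)
        (by omega) (by omega) (by omega)).inv_left.symm.inv_left.eq) w
    have hbr := fbraid (n := n) (a := i) (by omega) (by omega)
    calc fN n (i + 1) * ((U n 1 (i + 1 - 1))⁻¹ * ((U n 2 (i + 1))⁻¹ * z))
        = fN n (i + 1) * ((fN n i)⁻¹ * ((U n 1 (i - 1))⁻¹ *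
            ((fN n (i + 1))⁻¹ * ((U n 2 i)⁻¹ * z)))) := by
          rw [eU, eV]; simp only [mul_assoc]
      _ = fN n (i + 1) * ((fN n i)⁻¹ * ((fN n (i + 1))⁻¹ *
            ((U n 1 (i - 1))⁻¹ * ((U n 2 i)⁻¹ * z)))) := by
          rw [cAf]
      _ = (fN n i)⁻¹ * ((fN n (i + 1))⁻¹ * (fN n i *
            ((U n 1 (i - 1))⁻¹ * ((U n 2 i)⁻¹ * z)))) :=
          (move3 (braid_conj3 hbr) _).symm
      _ = (fN n i)⁻¹ * ((fN n (i + 1))⁻¹ *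
            ((U n 1 (i - 1))⁻¹ * ((U n 2 i)⁻¹ * (fN n 1 * z)))) := by
          rw [ih (by omega) z]
      _ = (fN n i)⁻¹ * ((U n 1 (i - 1))⁻¹ * ((fN n (i + 1))⁻¹ *
            ((U n 2 i)⁻¹ * (fN n 1 * z)))) := by
          rw [cAf]
      _ = (U n 1 (i + 1 - 1))⁻¹ * ((U n 2 (i + 1))⁻¹ * (fN n 1 * z)) := by
          rw [eU, eV]; simp only [mul_assoc]

lemma K3az : ∀ d i : ℕ, 1 ≤ i → i + d = n - 1 → ∀ z : BrExt n,
    (D n i (n - 2))⁻¹ * (fN n (n - 1) * (D n i (n - 2) * z)) =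
      D n (i + 1) (n - 1) * (fN n i * ((D n (i + 1) (n - 1))⁻¹ * z)) := by
  intro d
  induction d with
  | zero =>
    intro i hi1 hieq z
    have hi : i = n - 1 := by omega
    subst hi
    rw [D_empty (by omega), D_empty (by omega)]
    simp
  | succ d ihd =>
    intro i hi1 hieq z
    have IH := ihd (i + 1) (by omega) (by omega)
    have eD : D n i (n - 2) = D n (i + 1) (n - 2) * fN n i := D_right (by omega)
    have eD' : D n (i + 1) (n - 1) = D n (i + 2) (n - 1) * fN n (i + 1) := by
      have h := D_right (n := n) (a := i + 1) (b := n - 1) (by omega)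
      rw [show i + 1 + 1 = i + 2 by omega] at h
      exact h
    have hbr := fbraid (n := n) (a := i) (by omega) (by omega)
    have hcm : Commute (fN n i) (D n (i + 2) (n - 1)) :=
      commD_above hi1 (by omega) (by omega)
    calc (D n i (n - 2))⁻¹ * (fN n (n - 1) * (D n i (n - 2) * z))
        = (fN n i)⁻¹ * ((D n (i + 1) (n - 2))⁻¹ *
            (fN n (n - 1) * (D n (i + 1) (n - 2) * (fN n i * z)))) := by
          rw [eD]; simp only [mul_inv_rev, mul_assoc]
      _ = (fN n i)⁻¹ * (D n (i + 2) (n - 1) *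
            (fN n (i + 1) * ((D n (i + 2) (n - 1))⁻¹ * (fN n i * z)))) := by
          rw [IH (fN n i * z)]
      _ = D n (i + 2) (n - 1) * ((fN n i)⁻¹ *
            (fN n (i + 1) * ((D n (i + 2) (n - 1))⁻¹ * (fN n i * z)))) := by
          rw [move2 hcm.inv_left.eq]
      _ = D n (i + 2) (n - 1) * ((fN n i)⁻¹ *
            (fN n (i + 1) * (fN n i * ((D n (i + 2) (n - 1))⁻¹ * z)))) := by
          rw [move2 hcm.inv_right.symm.eq]
      _ = D n (i + 2) (n - 1) * (fN n (i + 1) *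
            (fN n i * ((fN n (i + 1))⁻¹ * ((D n (i + 2) (n - 1))⁻¹ * z)))) := by
          rw [move3 (braid_conj2 hbr) ((D n (i + 2) (n - 1))⁻¹ * z)]
      _ = D n (i + 1) (n - 1) * (fN n i * ((D n (i + 1) (n - 1))⁻¹ * z)) := by
          rw [eD']; simp only [mul_inv_rev, mul_assoc]

lemma K2z (hn : 2 ≤ n) (z : BrExt n) :
    fN n 1 * (omB n * (omB n * z)) = omB n * (omB n * (fN n (n - 1) * z)) := by
  have e0 : fN n 1 * omB n = omB n * fN n 0 := (om_f 0).symm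
  have e1 : fN n 0 * omB n = omB n * fN n (n - 1) := by
    have h := om_f (n := n) (n - 1)
    rw [show n - 1 + 1 = n by omega] at h
    have e : fN n n = fN n 0 := by unfold fN; norm_num [ZMod.natCast_self]
    rw [e] at h
    exact h.symm
  rw [move2 e0, move2 e1]

lemma K3z {i : ℕ} (h1 : 1 ≤ i) (h2 : i ≤ n - 1) (z : BrExt n) :
    fN n (n - 1) * (D n i (n - 2) * (D n (i + 1) (n - 1) * z)) =
      D n i (n - 2) * (D n (i + 1) (n - 1) * (fN n i * z)) := by
  have h := K3az (n - 1 - i) i h1 (by omega) (D n (i + 1) (n - 1) * z)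
  calc fN n (n - 1) * (D n i (n - 2) * (D n (i + 1) (n - 1) * z))
      = D n i (n - 2) * ((D n i (n - 2))⁻¹ *
          (fN n (n - 1) * (D n i (n - 2) * (D n (i + 1) (n - 1) * z)))) :=
        (mul_inv_cancel_left _ _).symm
    _ = D n i (n - 2) * (D n (i + 1) (n - 1) *
          (fN n i * ((D n (i + 1) (n - 1))⁻¹ * (D n (i + 1) (n - 1) * z)))) := by rw [h]
    _ = _ := by rw [inv_mul_cancel_left]

lemma yy_adj {i : ℕ} (hn : 2 ≤ n) (h1 : 1 ≤ i) (h2 : i ≤ n - 1) :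
    yN n i * yN n (i + 1) = yN n (i + 1) * yN n i := by
  have eU : (U n 1 (i + 1 - 1))⁻¹ = (fN n i)⁻¹ * (U n 1 (i - 1))⁻¹ := by
    rw [show i + 1 - 1 = i by omega]
    have h := U_succ (n := n) (a := 1) (b := i - 1) (by omega)
    rw [show i - 1 + 1 = i by omega] at h
    rw [h, mul_inv_rev]
  have eD : D n i (n - 1) = D n (i + 1) (n - 1) * fN n i := D_right h2
  have cAD : ∀ z : BrExt n, D n (i + 1) (n - 1) * ((U n 1 (i - 1))⁻¹ * z) =
      (U n 1 (i - 1))⁻¹ * (D n (i + 1) (n - 1) * z) := fun z =>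
    move2 ((commUD (n := n) (a := 1) (b := i - 1) (c := i + 1) (d := n - 1)
      (by omega) (by omega) (by omega)).symm.inv_right.eq) z
  have cOA : ∀ z : BrExt n, omB n * ((U n 1 (i - 1))⁻¹ * z) =
      (U n 2 i)⁻¹ * (omB n * z) := by
    intro z
    have h := omU (n := n) 1 (i - 1)
    rw [show i - 1 + 1 = i by omega, show (1 : ℕ) + 1 = 2 by norm_num] at h
    exact move2 (SemiconjBy.inv_right (h : SemiconjBy (omB n) (U n 1 (i - 1)) (U n 2 i))).eq z
  have cDO : ∀ z : BrExt n, D n (i + 1) (n - 1) * (omB n * z) =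
      omB n * (D n i (n - 2) * z) := by
    intro z
    have h := omD (n := n) i (n - 2)
    rw [show n - 2 + 1 = n - 1 by omega] at h
    exact move2 h.symm z
  have hc1 : yN n i * yN n (i + 1) =
      (U n 1 (i - 1))⁻¹ * ((U n 2 i)⁻¹ * (omB n * (omB n *
        (D n i (n - 2) * D n (i + 1) (n - 1))))) := by
    unfold yN
    rw [eU, eD]
    simp only [mul_assoc]
    rw [mul_inv_cancel_left, cAD, cOA, cDO]
  have hc2 : yN n (i + 1) * yN n i =
      (fN n i)⁻¹ * ((U n 1 (i - 1))⁻¹ * ((U n 2 i)⁻¹ * (omB n * (omB n *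
        (D n i (n - 2) * (D n (i + 1) (n - 1) * fN n i)))))) := by
    unfold yN
    rw [eU, eD]
    simp only [mul_assoc]
    rw [cAD, cOA, cDO]
  have hK : fN n i * ((U n 1 (i - 1))⁻¹ * ((U n 2 i)⁻¹ * (omB n * (omB n *
        (D n i (n - 2) * D n (i + 1) (n - 1)))))) =
      (U n 1 (i - 1))⁻¹ * ((U n 2 i)⁻¹ * (omB n * (omB n *
        (D n i (n - 2) * (D n (i + 1) (n - 1) * fN n i))))) := by
    rw [K1z h1 h2, K2z hn]
    rw [show D n i (n - 2) * D n (i + 1) (n - 1) =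
      D n i (n - 2) * (D n (i + 1) (n - 1) * 1) by rw [mul_one]]
    rw [K3z h1 h2, mul_one]
  rw [hc1, hc2, ← hK, inv_mul_cancel_left]

lemma yy_comm (hn : 2 ≤ n) : ∀ d i : ℕ, 1 ≤ i → i + d ≤ n →
    Commute (yN n i) (yN n (i + d)) := by
  intro d
  induction d with
  | zero => intro i h1 h2; exact Commute.refl _
  | succ d ihd =>
    intro i h1 h2
    cases d with
    | zero => exact yy_adj hn h1 (by omega)
    | succ d' =>
      have hrec := y_rec (n := n) (i := i + (d' + 1)) (by omega) (by omega)
      rw [show i + (d' + 1 + 1) = i + (d' + 1) + 1 by omega, hrec]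
      have c1 : Commute (yN n i) (fN n (i + (d' + 1)))⁻¹ :=
        (fy_comm (m := i + (d' + 1)) (i := i) (by omega) (by omega) h1 (by omega)
          (by omega) (by omega)).symm.inv_right
      have c2 : Commute (yN n i) (yN n (i + (d' + 1))) := ihd i h1 (by omega)
      exact (c1.mul_right c2).mul_right c1

lemma yy_comm' (hn : 2 ≤ n) {i j : ℕ} (hi : 1 ≤ i) (hj : 1 ≤ j) (hi2 : i ≤ n)
    (hj2 : j ≤ n) : Commute (yN n i) (yN n j) := by
  rcases le_total i j with h | h
  · have := yy_comm hn (j - i) i hi (by omega)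
    rwa [show i + (j - i) = j by omega] at this
  · have := yy_comm hn (i - j) j hj (by omega)
    rw [show j + (i - j) = i by omega] at this
    exact this.symm

/-- `τ_k = ω f_{n-1} ⋯ f_k`. -/
def tau (n k : ℕ) : BrExt n := omB n * D n k (n - 1)

lemma Cj {k : ℕ} (hk : k + 1 ≤ n) : ∀ j, j ≤ k →
    tau n k ^ j * (U n (k + 1 - j) k)⁻¹ = tau n (k + 1) ^ j := by
  intro j
  induction j with
  | zero => intro _; rw [U_empty (by omega)]; simp
  | succ j ihj =>
    intro hj
    have e1 : (U n (k + 1 - (j + 1)) k)⁻¹ = (fN n k)⁻¹ * (U n (k - j) (k - 1))⁻¹ := by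
      rw [show k + 1 - (j + 1) = k - j by omega]
      have h := U_succ (n := n) (a := k - j) (b := k - 1) (by omega)
      rw [show k - 1 + 1 = k by omega] at h
      rw [h, mul_inv_rev]
    have e2 : tau n k * (fN n k)⁻¹ = tau n (k + 1) := by
      unfold tau
      rw [D_right (show k ≤ n - 1 by omega)]
      simp [mul_assoc]
    have e3 : tau n (k + 1) * (U n (k - j) (k - 1))⁻¹ =
        (U n (k + 1 - j) k)⁻¹ * tau n (k + 1) := by
      unfold tau
      have hcm := (commUD (n := n) (a := k - j) (b := k - 1) (c := k + 1) (d := n - 1)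
        (by omega) (by omega) (by omega)).symm.inv_right
      have h := omU (n := n) (k - j) (k - 1)
      rw [show k - 1 + 1 = k by omega, show k - j + 1 = k + 1 - j by omega] at h
      have h2 := SemiconjBy.inv_right (h : SemiconjBy (omB n) _ _)
      calc omB n * D n (k + 1) (n - 1) * (U n (k - j) (k - 1))⁻¹
          = omB n * ((U n (k - j) (k - 1))⁻¹ * D n (k + 1) (n - 1)) := by
            rw [mul_assoc, hcm.eq]
        _ = (U n (k + 1 - j) k)⁻¹ * (omB n * D n (k + 1) (n - 1)) := by
            rw [← mul_assoc, h2.eq, mul_assoc]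
    have hj' : j ≤ k := by omega
    calc tau n k ^ (j + 1) * (U n (k + 1 - (j + 1)) k)⁻¹
        = tau n k ^ j * (tau n k * ((fN n k)⁻¹ * (U n (k - j) (k - 1))⁻¹)) := by
          rw [e1, pow_succ]; simp only [mul_assoc]
      _ = tau n k ^ j * (tau n (k + 1) * (U n (k - j) (k - 1))⁻¹) := by
          rw [show tau n k * ((fN n k)⁻¹ * (U n (k - j) (k - 1))⁻¹) =
            tau n (k + 1) * (U n (k - j) (k - 1))⁻¹ by rw [← mul_assoc, e2]]
      _ = tau n k ^ j * ((U n (k + 1 - j) k)⁻¹ * tau n (k + 1)) := by rw [e3]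
      _ = (tau n k ^ j * (U n (k + 1 - j) k)⁻¹) * tau n (k + 1) := by rw [mul_assoc]
      _ = tau n (k + 1) ^ j * tau n (k + 1) := by rw [ihj hj']
      _ = tau n (k + 1) ^ (j + 1) := by rw [pow_succ]

lemma yprod (hn : 2 ≤ n) : ∀ k, k ≤ n → 1 ≤ k →
    ((List.range k).map (fun t => yN n (t + 1))).prod = tau n k ^ k := by
  intro k
  induction k with
  | zero => intro _ hk; exact absurd hk (by omega)
  | succ k ihk =>
    intro hk1 _
    rcases Nat.eq_zero_or_pos k with h0 | hpos
    · subst h0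
      simp only [List.range_succ, List.range_zero, List.nil_append, List.map_cons,
        List.map_nil, List.prod_cons, List.prod_nil, pow_one, mul_one]
      unfold yN tau
      rw [U_empty (by omega)]
      simp
    · rw [List.range_succ, List.map_append, List.prod_append, ihk (by omega) hpos]
      simp only [List.map_cons, List.map_nil, List.prod_cons, List.prod_nil, mul_one]
      have hy : yN n (k + 1) = (U n 1 k)⁻¹ * tau n (k + 1) := by
        unfold yN tau
        rw [show k + 1 - 1 = k by omega, mul_assoc]
      rw [hy, ← mul_assoc]
      have hc := Cj (n := n) (k := k) (by omega) k (le_refl k)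
      rw [show k + 1 - k = 1 by omega] at hc
      rw [hc, ← pow_succ]

/-- the partial products `y_1^{a 0} ⋯ y_m^{a (m-1)}`. -/
def Qp (n : ℕ) (a : ℕ → ℤ) (m : ℕ) : BrExt n :=
  ((List.range m).map (fun k => yN n (k + 1) ^ a k)).prod

lemma Qp_succ (a : ℕ → ℤ) (m : ℕ) :
    Qp n a (m + 1) = Qp n a m * yN n (m + 1) ^ a m := by
  unfold Qp
  rw [List.range_succ, List.map_append, List.prod_append]
  simp

lemma Qadd (hn : 2 ≤ n) (a b : ℕ → ℤ) : ∀ m, m ≤ n →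
    Qp n (fun k => a k + b k) m = Qp n a m * Qp n b m := by
  intro m
  induction m with
  | zero => intro _; simp [Qp]
  | succ m ih =>
    intro hm
    have hcom : Commute (Qp n b m) (yN n (m + 1) ^ a m) := by
      unfold Qp
      apply Commute.list_prod_left
      intro x hx
      simp only [List.mem_map, List.mem_range] at hx
      obtain ⟨k, hk, rfl⟩ := hx
      exact (yy_comm' hn (by omega) (by omega) (by omega) (by omega)).zpow_zpow _ _
    rw [Qp_succ, Qp_succ, Qp_succ, ih (by omega), zpow_add]
    simp only [mul_assoc]
    rw [move2 hcom.eq]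

lemma Qzero {a : ℕ → ℤ} (h : ∀ k < n, a k = 0) : Qp n a n = 1 := by
  unfold Qp
  apply List.prod_eq_one
  intro x hx
  simp only [List.mem_map, List.mem_range] at hx
  obtain ⟨k, hk, rfl⟩ := hx
  rw [h k hk, zpow_zero]

lemma Qchi (hn : 2 ≤ n) {m : ℕ} (h1 : 1 ≤ m) (h2 : m ≤ n) :
    Qp n (fun k => if k < m then (1 : ℤ) else 0) n = tau n m ^ m := by
  have hstep : ∀ t, m ≤ t → Qp n (fun k => if k < m then (1 : ℤ) else 0) t =
      Qp n (fun k => if k < m then (1 : ℤ) else 0) m := by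
    intro t ht
    induction t, ht using Nat.le_induction with
    | base => rfl
    | succ t ht iht =>
      rw [Qp_succ, iht]
      simp [show ¬(t < m) by omega]
  rw [hstep n h2]
  have he : Qp n (fun k => if k < m then (1 : ℤ) else 0) m =
      ((List.range m).map (fun t => yN n (t + 1))).prod := by
    unfold Qp
    have e : (List.range m).map (fun k => yN n (k + 1) ^ (if k < m then (1 : ℤ) else 0)) =
        (List.range m).map (fun t => yN n (t + 1)) :=
      List.map_congr_left (fun k hk => by
        have := List.mem_range.mp hk
        simp [this])
    rw [e]
  rw [he, yprod hn m h2 h1]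

/-- the positive submonoid. -/
def posM (n : ℕ) : Submonoid (BrExt n) :=
  Submonoid.closure ({omB n} ∪ Set.range (fB n))

lemma om_mem : omB n ∈ posM n :=
  Submonoid.subset_closure (Or.inl rfl)

lemma fN_mem (m : ℕ) : fN n m ∈ posM n :=
  Submonoid.subset_closure (Or.inr ⟨(m : ZMod n), rfl⟩)

lemma D_mem (a b : ℕ) : D n a b ∈ posM n := by
  unfold D
  apply Submonoid.list_prod_mem
  intro x hx
  simp only [List.mem_map, List.mem_range] at hx
  obtain ⟨k, hk, rfl⟩ := hx
  exact fN_mem _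

lemma tau_mem (k : ℕ) : tau n k ∈ posM n := mul_mem om_mem (D_mem _ _)

lemma domMem (hn : 2 ≤ n) : ∀ N (a : ℕ → ℤ),
    (∀ j k, j ≤ k → k < n → a k ≤ a j) → (∀ k, 0 ≤ a k) →
    (∑ k ∈ Finset.range n, (a k).toNat) ≤ N →
    Qp n a n ∈ posM n := by
  intro N
  induction N with
  | zero =>
    intro a hdec hpos hsum
    have hz : ∀ k < n, a k = 0 := by
      intro k hk
      have h1 : (a k).toNat = 0 := by
        by_contra h
        have : 0 < ∑ k ∈ Finset.range n, (a k).toNat :=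
          lt_of_lt_of_le (Nat.pos_of_ne_zero h) (Finset.single_le_sum (f := fun k => (a k).toNat)
            (fun _ _ => Nat.zero_le _) (Finset.mem_range.mpr hk))
        omega
      have h2 := Int.toNat_eq_zero.mp h1
      have := hpos k
      omega
    rw [Qzero hz]
    exact one_mem _
  | succ N ihN =>
    intro a hdec hpos hsum
    by_cases hz : ∀ k < n, a k = 0
    · rw [Qzero hz]; exact one_mem _
    · push_neg at hz
      obtain ⟨k0, hk0n, hk0⟩ := hz
      have h0 : 1 ≤ a 0 := by
        have h1 := hpos k0
        have h2 := hdec 0 k0 (Nat.zero_le _) hk0n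
        omega
      have hex : ∃ k, n ≤ k ∨ a k ≤ 0 := ⟨n, Or.inl le_rfl⟩
      set m := Nat.find hex with hm
      have hmspec : n ≤ m ∨ a m ≤ 0 := Nat.find_spec hex
      have hmlt : ∀ k, k < m → ¬(n ≤ k ∨ a k ≤ 0) := fun k hk => Nat.find_min hex hk
      have hm1 : 1 ≤ m := by
        rcases Nat.eq_zero_or_pos m with h | h
        · exfalso
          rw [h] at hmspec
          rcases hmspec with h' | h' <;> omega
        · exact h
      have hmn : m ≤ n := Nat.find_le (Or.inl le_rfl)
      have hlow : ∀ k, k < m → 1 ≤ a k ∧ k < n := by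
        intro k hk
        have := hmlt k hk
        push_neg at this
        exact ⟨by omega, by omega⟩
      have hhigh : ∀ k, m ≤ k → k < n → a k = 0 := by
        intro k hk hkn
        rcases hmspec with h | h
        · omega
        · have h1 := hdec m k hk hkn
          have h2 := hpos k
          omega
      set b : ℕ → ℤ := fun k => a k - (if k < m then 1 else 0) with hb
      have hbdec : ∀ j k, j ≤ k → k < n → b k ≤ b j := by
        intro j k hjk hkn
        simp only [hb]
        by_cases hkm : k < m
        · have hjm : j < m := lt_of_le_of_lt hjk hkm
          simp only [if_pos hkm, if_pos hjm]
          have := hdec j k hjk hkn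
          omega
        · by_cases hjm : j < m
          · simp only [if_neg hkm, if_pos hjm]
            have h1 := (hlow j hjm).1
            have h2 := hhigh k (by omega) hkn
            omega
          · simp only [if_neg hkm, if_neg hjm]
            have := hdec j k hjk hkn
            omega
      have hbpos : ∀ k, 0 ≤ b k := by
        intro k
        simp only [hb]
        by_cases hkm : k < m
        · have := (hlow k hkm).1
          simp only [if_pos hkm]
          omega
        · simp only [if_neg hkm]
          have := hpos k
          omega
      have hbsum : (∑ k ∈ Finset.range n, (b k).toNat) ≤ N := by
        have hlt : (∑ k ∈ Finset.range n, (b k).toNat) <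
            (∑ k ∈ Finset.range n, (a k).toNat) := by
          apply Finset.sum_lt_sum
          · intro k _
            simp only [hb]
            split <;> omega
          · refine ⟨0, Finset.mem_range.mpr (by omega), ?_⟩
            simp only [hb, if_pos (show 0 < m by omega)]
            omega
        omega
      have hQ : Qp n a n = Qp n b n * Qp n (fun k => if k < m then (1 : ℤ) else 0) n := by
        rw [show a = fun k => b k + (if k < m then (1 : ℤ) else 0) from funext fun k => by
          simp [hb]]
        exact Qadd hn b _ n le_rfl
      rw [hQ, Qchi hn hm1 hmn]
      exact mul_mem (ihN b hbdec hbpos hbsum) (pow_mem (tau_mem m) m)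

lemma wB_eq (hn : 2 ≤ n) (lam : Fin n → ℤ) :
    wB n lam = Qp n (fun k => if h : k < n then lam ⟨k, h⟩ else 0) n := by
  unfold wB Qp
  congr 1
  refine List.ext_getElem (by simp) ?_
  intro i h1 h2
  simp only [List.getElem_ofFn, List.getElem_map, List.getElem_range]
  have hi : i < n := by simpa using h1
  rw [dif_pos hi, y_eq hn]

lemma inv_mem_neg {x : BrExt n} (hx : x ∈ posM n) :
    x⁻¹ ∈ Submonoid.closure ({(omB n)⁻¹} ∪ Set.range (fun i : ZMod n => (fB n i)⁻¹)) := by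
  induction hx using Submonoid.closure_induction with
  | mem y hy =>
    apply Submonoid.subset_closure
    rcases hy with h | ⟨i, rfl⟩
    · rw [Set.mem_singleton_iff] at h
      rw [h]
      exact Or.inl rfl
    · exact Or.inr ⟨i, rfl⟩
  | one => rw [inv_one]; exact one_mem _
  | mul y z _ _ ihy ihz => rw [mul_inv_rev]; exact mul_mem ihz ihy

lemma Qneg (hn : 2 ≤ n) (a : ℕ → ℤ) :
    Qp n a n = (Qp n (fun k => -(a k)) n)⁻¹ := by
  apply eq_inv_of_mul_eq_one_left
  have h := Qadd hn a (fun k => -(a k)) n le_rfl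
  rw [← h]
  apply Qzero
  intro k _
  show a k + -(a k) = 0
  omega

end BrAux

theorem statement_9 (n : ℕ) (hn : 2 ≤ n) (lam : Fin n → ℤ) :
    -- dominant `λ` (i.e. `x_1 ≥ x_2 ≥ ⋯ ≥ x_n ≥ 0`): `w_λ` is a positive braid
    ((∀ i j : Fin n, i ≤ j → lam j ≤ lam i) → (∀ i : Fin n, 0 ≤ lam i) →
      wB n lam ∈ Submonoid.closure ({omB n} ∪ Set.range (fB n))) ∧
    -- antidominant `λ` (i.e. `x_1 ≤ x_2 ≤ ⋯ ≤ x_n ≤ 0`): `w_λ` is a negative braid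
    ((∀ i j : Fin n, i ≤ j → lam i ≤ lam j) → (∀ i : Fin n, lam i ≤ 0) →
      wB n lam ∈ Submonoid.closure ({(omB n)⁻¹} ∪ Set.range (fun i : ZMod n => (fB n i)⁻¹))) := by
  constructor
  · intro hdec hpos
    rw [BrAux.wB_eq hn lam]
    exact BrAux.domMem hn _ _
      (fun j k hjk hkn => by
        rw [dif_pos hkn, dif_pos (lt_of_le_of_lt hjk hkn)]
        exact hdec ⟨j, lt_of_le_of_lt hjk hkn⟩ ⟨k, hkn⟩ hjk)
      (fun k => by
        by_cases h : k < n
        · rw [dif_pos h]; exact hpos _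
        · rw [dif_neg h])
      le_rfl
  · intro hinc hneg
    rw [BrAux.wB_eq hn lam, BrAux.Qneg hn]
    apply BrAux.inv_mem_neg
    exact BrAux.domMem hn _ _
      (fun j k hjk hkn => by
        simp only [dif_pos hkn, dif_pos (lt_of_le_of_lt hjk hkn)]
        have := hinc ⟨j, lt_of_le_of_lt hjk hkn⟩ ⟨k, hkn⟩ hjk
        omega)
      (fun k => by
        by_cases h : k < n
        · simp only [dif_pos h]
          have := hneg ⟨k, h⟩
          omega
        · simp only [dif_neg h, neg_zero, le_refl])
      le_rfl
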